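/- Let M_1 = (S,A,P_1,r_1,γ_1) and M_2 = (S,A,P_2,r_2,γ_2) be finite MDPs with γ_1 ≤ γ_2 and ‖r_2‖_∞ ≤ ‖r_1‖_∞. Then ‖Q_1* - Q_2*‖_∞ ≤ ‖r_1 - r_2‖_∞/(1-γ_1) + γ_1 ‖r_2‖_∞ ‖P_1 - P_2‖_∞/(1-γ_1)² + |γ_1 - γ_2| ‖r_2‖_∞ / ((1-γ_1)(1-γ_2)). -/

import Mathlib

open Set

section MDPHelpers

lemma le_fsup {ι : Type*} [Fintype ι] (f : ι → ℝ) (i : ι) : f i ≤ ⨆ j, f j :=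
  le_ciSup (Set.Finite.bddAbove (Set.finite_range f)) i

lemma abs_fsup_sub_fsup {ι : Type*} [Fintype ι] [Nonempty ι] (f g : ι → ℝ) :
    |(⨆ i, f i) - ⨆ i, g i| ≤ ⨆ i, |f i - g i| := by
  rw [abs_sub_le_iff]
  constructor
  · rw [sub_le_iff_le_add]
    apply ciSup_le
    intro i
    have h1 : f i ≤ |f i - g i| + g i := by
      have := le_abs_self (f i - g i); linarith
    exact h1.trans (add_le_add (le_fsup (fun j => |f j - g j|) i) (le_fsup g i))
  · rw [sub_le_iff_le_add]
    apply ciSup_le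
    intro i
    have h1 : g i ≤ |f i - g i| + f i := by
      have := neg_abs_le (f i - g i); linarith
    exact h1.trans (add_le_add (le_fsup (fun j => |f j - g j|) i) (le_fsup f i))

lemma abs_fsup_le {ι : Type*} [Fintype ι] [Nonempty ι] (f : ι → ℝ) :
    |⨆ i, f i| ≤ ⨆ i, |f i| := by
  have := abs_fsup_sub_fsup f (fun _ => (0 : ℝ))
  simpa using this

lemma abs_sum_prob_mul {S : Type*} [Fintype S] (P : S → ℝ) (hP0 : ∀ s, 0 ≤ P s)
    (hP1 : ∑ s, P s = 1) (v : S → ℝ) (c : ℝ) (hv : ∀ s, |v s| ≤ c) :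
    |∑ s, P s * v s| ≤ c := by
  calc |∑ s, P s * v s| ≤ ∑ s, |P s * v s| := Finset.abs_sum_le_sum_abs _ _
    _ = ∑ s, P s * |v s| := by
        refine Finset.sum_congr rfl fun s _ => ?_
        rw [abs_mul, abs_of_nonneg (hP0 s)]
    _ ≤ ∑ s, P s * c := by
        refine Finset.sum_le_sum fun s _ => mul_le_mul_of_nonneg_left (hv s) (hP0 s)
    _ = c := by rw [← Finset.sum_mul, hP1, one_mul]

lemma abs_sum_mul_le_sum_abs_mul {S : Type*} [Fintype S] (w v : S → ℝ) (c : ℝ)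
    (hv : ∀ s, |v s| ≤ c) :
    |∑ s, w s * v s| ≤ (∑ s, |w s|) * c := by
  calc |∑ s, w s * v s| ≤ ∑ s, |w s * v s| := Finset.abs_sum_le_sum_abs _ _
    _ ≤ ∑ s, |w s| * c := by
        refine Finset.sum_le_sum fun s _ => ?_
        rw [abs_mul]
        exact mul_le_mul_of_nonneg_left (hv s) (abs_nonneg _)
    _ = (∑ s, |w s|) * c := (Finset.sum_mul _ _ _).symm

/-- Generic perturbation bound between two Bellman fixed points. -/
lemma mdp_core {S A : Type*} [Fintype S] [Fintype A] [Nonempty S] [Nonempty A]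
    (P P' : S → A → S → ℝ)
    (hP0 : ∀ s a s', 0 ≤ P s a s') (hP1 : ∀ s a, ∑ s', P s a s' = 1)
    (hP'0 : ∀ s a s', 0 ≤ P' s a s') (hP'1 : ∀ s a, ∑ s', P' s a s' = 1)
    (r r' : S → A → ℝ) (γ γ' : ℝ) (hγ : γ ∈ Set.Ioo (0 : ℝ) 1)
    (Q Q' : S → A → ℝ)
    (hQ : ∀ s a, Q s a = r s a + γ * ∑ s', P s a s' * (⨆ a', Q s' a'))
    (hQ' : ∀ s a, Q' s a = r' s a + γ' * ∑ s', P' s a s' * (⨆ a', Q' s' a')) :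
    (⨆ p : S × A, |Q p.1 p.2 - Q' p.1 p.2|) ≤
      ((⨆ p : S × A, |r p.1 p.2 - r' p.1 p.2|)
        + γ * (⨆ p : S × A, ∑ s', |P p.1 p.2 s' - P' p.1 p.2 s'|) *
            (⨆ p : S × A, |Q' p.1 p.2|)
        + |γ - γ'| * (⨆ p : S × A, |Q' p.1 p.2|)) / (1 - γ) := by
  set D := ⨆ p : S × A, |Q p.1 p.2 - Q' p.1 p.2| with hD
  set Δr := ⨆ p : S × A, |r p.1 p.2 - r' p.1 p.2| with hΔr
  set ΔP := ⨆ p : S × A, ∑ s', |P p.1 p.2 s' - P' p.1 p.2 s'| with hΔP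
  set N := ⨆ p : S × A, |Q' p.1 p.2| with hN
  set V : S → ℝ := fun s => ⨆ a, Q s a with hV
  set V' : S → ℝ := fun s => ⨆ a, Q' s a with hV'
  have hN0 : 0 ≤ N := le_trans (abs_nonneg _)
    (le_fsup (fun p : S × A => |Q' p.1 p.2|) Classical.ofNonempty)
  have hVd : ∀ s, |V s - V' s| ≤ D := by
    intro s
    refine (abs_fsup_sub_fsup (Q s) (Q' s)).trans (ciSup_le fun a => ?_)
    exact le_fsup (fun p : S × A => |Q p.1 p.2 - Q' p.1 p.2|) (s, a)
  have hV'b : ∀ s, |V' s| ≤ N := by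
    intro s
    refine (abs_fsup_le (Q' s)).trans (ciSup_le fun a => ?_)
    exact le_fsup (fun p : S × A => |Q' p.1 p.2|) (s, a)
  have hpt : ∀ s a, |Q s a - Q' s a| ≤ Δr + γ * D + γ * ΔP * N + |γ - γ'| * N := by
    intro s a
    have key : Q s a - Q' s a =
        (r s a - r' s a)
        + γ * ∑ s', P s a s' * (V s' - V' s')
        + γ * ∑ s', (P s a s' - P' s a s') * V' s'
        + (γ - γ') * ∑ s', P' s a s' * V' s' := by
      rw [hQ s a, hQ' s a]
      simp only [hV, hV', mul_sub, sub_mul, Finset.sum_sub_distrib]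
      ring
    have h1 : |r s a - r' s a| ≤ Δr :=
      le_fsup (fun p : S × A => |r p.1 p.2 - r' p.1 p.2|) (s, a)
    have h2 : |∑ s', P s a s' * (V s' - V' s')| ≤ D :=
      abs_sum_prob_mul _ (hP0 s a) (hP1 s a) _ D hVd
    have h3 : |∑ s', (P s a s' - P' s a s') * V' s'| ≤ ΔP * N := by
      refine (abs_sum_mul_le_sum_abs_mul _ _ N hV'b).trans ?_
      have : (∑ s', |P s a s' - P' s a s'|) ≤ ΔP :=
        le_fsup (fun p : S × A => ∑ s', |P p.1 p.2 s' - P' p.1 p.2 s'|) (s, a)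
      exact mul_le_mul_of_nonneg_right this hN0
    have h4 : |∑ s', P' s a s' * V' s'| ≤ N :=
      abs_sum_prob_mul _ (hP'0 s a) (hP'1 s a) _ N hV'b
    calc |Q s a - Q' s a|
        ≤ |r s a - r' s a| + |γ * ∑ s', P s a s' * (V s' - V' s')|
          + |γ * ∑ s', (P s a s' - P' s a s') * V' s'|
          + |(γ - γ') * ∑ s', P' s a s' * V' s'| := by
          rw [key]; exact (abs_add_le _ _).trans (add_le_add ((abs_add_le _ _).trans
            (add_le_add (abs_add_le _ _) le_rfl)) le_rfl)
      _ ≤ Δr + γ * D + γ * (ΔP * N) + |γ - γ'| * N := by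
          rw [abs_mul, abs_mul, abs_mul, abs_of_nonneg hγ.1.le]
          exact add_le_add (add_le_add (add_le_add h1
            (mul_le_mul_of_nonneg_left h2 hγ.1.le))
            (mul_le_mul_of_nonneg_left h3 hγ.1.le))
            (mul_le_mul_of_nonneg_left h4 (abs_nonneg _))
      _ = Δr + γ * D + γ * ΔP * N + |γ - γ'| * N := by ring
  have hDle : D ≤ Δr + γ * D + γ * ΔP * N + |γ - γ'| * N :=
    ciSup_le fun p => hpt p.1 p.2
  rw [le_div_iff₀ (by linarith [hγ.2] : (0:ℝ) < 1 - γ)]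
  nlinarith [hDle]

/-- Sup-norm bound for a Bellman fixed point. -/
lemma mdp_norm_bound {S A : Type*} [Fintype S] [Fintype A] [Nonempty S] [Nonempty A]
    (P : S → A → S → ℝ)
    (hP0 : ∀ s a s', 0 ≤ P s a s') (hP1 : ∀ s a, ∑ s', P s a s' = 1)
    (r : S → A → ℝ) (γ : ℝ) (hγ : γ ∈ Set.Ioo (0 : ℝ) 1)
    (Q : S → A → ℝ)
    (hQ : ∀ s a, Q s a = r s a + γ * ∑ s', P s a s' * (⨆ a', Q s' a')) :
    (⨆ p : S × A, |Q p.1 p.2|) ≤ (⨆ p : S × A, |r p.1 p.2|) / (1 - γ) := by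
  have h := mdp_core P P hP0 hP1 hP0 hP1 r (fun _ _ => 0) γ γ hγ Q (fun _ _ => 0)
    hQ (by intro s a; simp [ciSup_const])
  simpa using h

/-- Existence of a Bellman fixed point. -/
lemma mdp_exists_fixed {S A : Type*} [Fintype S] [Fintype A] [Nonempty S] [Nonempty A]
    (P : S → A → S → ℝ)
    (hP0 : ∀ s a s', 0 ≤ P s a s') (hP1 : ∀ s a, ∑ s', P s a s' = 1)
    (r : S → A → ℝ) (γ : ℝ) (hγ : γ ∈ Set.Ioo (0 : ℝ) 1) :
    ∃ Q : S → A → ℝ, ∀ s a, Q s a = r s a + γ * ∑ s', P s a s' * (⨆ a', Q s' a') := by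
  set T : (S → A → ℝ) → (S → A → ℝ) :=
    fun Q s a => r s a + γ * ∑ s', P s a s' * (⨆ a', Q s' a') with hT
  have hK : (⟨γ, hγ.1.le⟩ : NNReal) < 1 := by
    exact NNReal.coe_lt_coe.mp (show γ < 1 from hγ.2)
  have hLip : LipschitzWith ⟨γ, hγ.1.le⟩ T := by
    apply LipschitzWith.of_dist_le_mul
    intro Q Q'
    change dist (T Q) (T Q') ≤ γ * dist Q Q'
    have hd0 : (0:ℝ) ≤ γ * dist Q Q' := mul_nonneg hγ.1.le dist_nonneg
    rw [dist_pi_le_iff hd0]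
    intro s
    rw [dist_pi_le_iff hd0]
    intro a
    rw [Real.dist_eq]
    have hv : ∀ s', |(⨆ a', Q s' a') - ⨆ a', Q' s' a'| ≤ dist Q Q' := by
      intro s'
      refine (abs_fsup_sub_fsup (Q s') (Q' s')).trans (ciSup_le fun a' => ?_)
      calc |Q s' a' - Q' s' a'| = dist (Q s' a') (Q' s' a') := (Real.dist_eq _ _).symm
        _ ≤ dist (Q s') (Q' s') := dist_le_pi_dist (Q s') (Q' s') a'
        _ ≤ dist Q Q' := dist_le_pi_dist Q Q' s'
    have : |T Q s a - T Q' s a| ≤ γ * dist Q Q' := by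
      have heq : T Q s a - T Q' s a =
          γ * ∑ s', P s a s' * ((⨆ a', Q s' a') - ⨆ a', Q' s' a') := by
        simp only [hT, mul_sub, Finset.sum_sub_distrib]
        ring
      rw [heq, abs_mul, abs_of_nonneg hγ.1.le]
      exact mul_le_mul_of_nonneg_left
        (abs_sum_prob_mul _ (hP0 s a) (hP1 s a) _ _ hv) hγ.1.le
    simpa using this
  have hC : ContractingWith ⟨γ, hγ.1.le⟩ T := ⟨hK, hLip⟩
  refine ⟨ContractingWith.fixedPoint T hC, fun s a => ?_⟩
  have := ContractingWith.fixedPoint_isFixedPt hC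
  conv_lhs => rw [← this]

end MDPHelpers

/-- For two finite MDPs `M₁ = (S,A,P₁,r₁,γ₁)`, `M₂ = (S,A,P₂,r₂,γ₂)` with
`γ₁ ≤ γ₂` and `‖r₂‖_∞ ≤ ‖r₁‖_∞`, the optimal Q-functions satisfy
`‖Q₁* - Q₂*‖_∞ ≤ ‖r₁ - r₂‖_∞/(1-γ₁) + γ₁‖r₂‖_∞‖P₁ - P₂‖_∞/(1-γ₁)²
  + |γ₁ - γ₂|‖r₂‖_∞/((1-γ₁)(1-γ₂))`. -/
theorem optimal_q_diff_general
    {S A : Type*} [Fintype S] [Fintype A] [Nonempty S] [Nonempty A]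
    (P₁ P₂ : S → A → S → ℝ)
    (hP₁0 : ∀ s a s', 0 ≤ P₁ s a s') (hP₁1 : ∀ s a, ∑ s', P₁ s a s' = 1)
    (hP₂0 : ∀ s a s', 0 ≤ P₂ s a s') (hP₂1 : ∀ s a, ∑ s', P₂ s a s' = 1)
    (r₁ r₂ : S → A → ℝ)
    (γ₁ γ₂ : ℝ) (hγ₁ : γ₁ ∈ Set.Ioo (0 : ℝ) 1) (hγ₂ : γ₂ ∈ Set.Ioo (0 : ℝ) 1)
    (hγ : γ₁ ≤ γ₂)
    (hr : (⨆ p : S × A, |r₂ p.1 p.2|) ≤ ⨆ p : S × A, |r₁ p.1 p.2|)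
    (Q₁ Q₂ : S → A → ℝ)
    (hQ₁ : ∀ s a, Q₁ s a = r₁ s a + γ₁ * ∑ s', P₁ s a s' * (⨆ a', Q₁ s' a'))
    (hQ₂ : ∀ s a, Q₂ s a = r₂ s a + γ₂ * ∑ s', P₂ s a s' * (⨆ a', Q₂ s' a')) :
    (⨆ p : S × A, |Q₁ p.1 p.2 - Q₂ p.1 p.2|) ≤
      (⨆ p : S × A, |r₁ p.1 p.2 - r₂ p.1 p.2|) / (1 - γ₁)
      + γ₁ * (⨆ p : S × A, |r₂ p.1 p.2|) *
          (⨆ p : S × A, ∑ s', |P₁ p.1 p.2 s' - P₂ p.1 p.2 s'|) / (1 - γ₁) ^ 2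
      + |γ₁ - γ₂| * (⨆ p : S × A, |r₂ p.1 p.2|) / ((1 - γ₁) * (1 - γ₂)) := by
  have h1γ₁ : (0:ℝ) < 1 - γ₁ := by linarith [hγ₁.2]
  have h1γ₂ : (0:ℝ) < 1 - γ₂ := by linarith [hγ₂.2]
  obtain ⟨Q₃, hQ₃⟩ := mdp_exists_fixed P₁ hP₁0 hP₁1 r₂ γ₁ hγ₁
  obtain ⟨Q₄, hQ₄⟩ := mdp_exists_fixed P₂ hP₂0 hP₂1 r₂ γ₁ hγ₁
  set Δr := ⨆ p : S × A, |r₁ p.1 p.2 - r₂ p.1 p.2| with hΔrdef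
  set ΔP := ⨆ p : S × A, ∑ s', |P₁ p.1 p.2 s' - P₂ p.1 p.2 s'| with hΔPdef
  set Nr := ⨆ p : S × A, |r₂ p.1 p.2| with hNrdef
  have hΔP0 : 0 ≤ ΔP := le_trans (Finset.sum_nonneg fun _ _ => abs_nonneg _)
    (le_fsup (fun p : S × A => ∑ s', |P₁ p.1 p.2 s' - P₂ p.1 p.2 s'|) Classical.ofNonempty)
  have h13 : (⨆ p : S × A, |Q₁ p.1 p.2 - Q₃ p.1 p.2|) ≤ Δr / (1 - γ₁) := by
    have h := mdp_core P₁ P₁ hP₁0 hP₁1 hP₁0 hP₁1 r₁ r₂ γ₁ γ₁ hγ₁ Q₁ Q₃ hQ₁ hQ₃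
    simpa [ciSup_const] using h
  have h34 : (⨆ p : S × A, |Q₃ p.1 p.2 - Q₄ p.1 p.2|) ≤
      γ₁ * ΔP * (⨆ p : S × A, |Q₄ p.1 p.2|) / (1 - γ₁) := by
    have h := mdp_core P₁ P₂ hP₁0 hP₁1 hP₂0 hP₂1 r₂ r₂ γ₁ γ₁ hγ₁ Q₃ Q₄ hQ₃ hQ₄
    simpa [ciSup_const] using h
  have h42 : (⨆ p : S × A, |Q₄ p.1 p.2 - Q₂ p.1 p.2|) ≤
      |γ₁ - γ₂| * (⨆ p : S × A, |Q₂ p.1 p.2|) / (1 - γ₁) := by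
    have h := mdp_core P₂ P₂ hP₂0 hP₂1 hP₂0 hP₂1 r₂ r₂ γ₁ γ₂ hγ₁ Q₄ Q₂ hQ₄ hQ₂
    simpa [ciSup_const] using h
  have hN4 : (⨆ p : S × A, |Q₄ p.1 p.2|) ≤ Nr / (1 - γ₁) :=
    mdp_norm_bound P₂ hP₂0 hP₂1 r₂ γ₁ hγ₁ Q₄ hQ₄
  have hN2 : (⨆ p : S × A, |Q₂ p.1 p.2|) ≤ Nr / (1 - γ₂) :=
    mdp_norm_bound P₂ hP₂0 hP₂1 r₂ γ₂ hγ₂ Q₂ hQ₂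
  have htri : (⨆ p : S × A, |Q₁ p.1 p.2 - Q₂ p.1 p.2|) ≤
      (⨆ p : S × A, |Q₁ p.1 p.2 - Q₃ p.1 p.2|)
      + (⨆ p : S × A, |Q₃ p.1 p.2 - Q₄ p.1 p.2|)
      + (⨆ p : S × A, |Q₄ p.1 p.2 - Q₂ p.1 p.2|) := by
    apply ciSup_le
    intro p
    have : |Q₁ p.1 p.2 - Q₂ p.1 p.2| ≤
        |Q₁ p.1 p.2 - Q₃ p.1 p.2| + |Q₃ p.1 p.2 - Q₄ p.1 p.2| + |Q₄ p.1 p.2 - Q₂ p.1 p.2| := by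
      have := abs_sub_le (Q₁ p.1 p.2) (Q₃ p.1 p.2) (Q₂ p.1 p.2)
      have := abs_sub_le (Q₃ p.1 p.2) (Q₄ p.1 p.2) (Q₂ p.1 p.2)
      linarith
    exact this.trans (add_le_add (add_le_add
      (le_fsup (fun p : S × A => |Q₁ p.1 p.2 - Q₃ p.1 p.2|) p)
      (le_fsup (fun p : S × A => |Q₃ p.1 p.2 - Q₄ p.1 p.2|) p))
      (le_fsup (fun p : S × A => |Q₄ p.1 p.2 - Q₂ p.1 p.2|) p))
  have e2 : γ₁ * ΔP * (⨆ p : S × A, |Q₄ p.1 p.2|) / (1 - γ₁) ≤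
      γ₁ * Nr * ΔP / (1 - γ₁) ^ 2 := by
    have step : γ₁ * ΔP * (⨆ p : S × A, |Q₄ p.1 p.2|) ≤ γ₁ * ΔP * (Nr / (1 - γ₁)) :=
      mul_le_mul_of_nonneg_left hN4 (mul_nonneg hγ₁.1.le hΔP0)
    calc γ₁ * ΔP * (⨆ p : S × A, |Q₄ p.1 p.2|) / (1 - γ₁)
        ≤ γ₁ * ΔP * (Nr / (1 - γ₁)) / (1 - γ₁) := by
          exact div_le_div_of_nonneg_right step h1γ₁.le |>.trans_eq rfl
      _ = γ₁ * Nr * ΔP / (1 - γ₁) ^ 2 := by field_simp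
  have e3 : |γ₁ - γ₂| * (⨆ p : S × A, |Q₂ p.1 p.2|) / (1 - γ₁) ≤
      |γ₁ - γ₂| * Nr / ((1 - γ₁) * (1 - γ₂)) := by
    have step : |γ₁ - γ₂| * (⨆ p : S × A, |Q₂ p.1 p.2|) ≤ |γ₁ - γ₂| * (Nr / (1 - γ₂)) :=
      mul_le_mul_of_nonneg_left hN2 (abs_nonneg _)
    calc |γ₁ - γ₂| * (⨆ p : S × A, |Q₂ p.1 p.2|) / (1 - γ₁)
        ≤ |γ₁ - γ₂| * (Nr / (1 - γ₂)) / (1 - γ₁) := by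
          exact div_le_div_of_nonneg_right step h1γ₁.le |>.trans_eq rfl
      _ = |γ₁ - γ₂| * Nr / ((1 - γ₁) * (1 - γ₂)) := by
          rw [mul_div_assoc', div_div, mul_comm (1 - γ₂) (1 - γ₁)]
  calc (⨆ p : S × A, |Q₁ p.1 p.2 - Q₂ p.1 p.2|)
      ≤ (⨆ p : S × A, |Q₁ p.1 p.2 - Q₃ p.1 p.2|)
        + (⨆ p : S × A, |Q₃ p.1 p.2 - Q₄ p.1 p.2|)
        + (⨆ p : S × A, |Q₄ p.1 p.2 - Q₂ p.1 p.2|) := htri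
    _ ≤ Δr / (1 - γ₁) + γ₁ * ΔP * (⨆ p : S × A, |Q₄ p.1 p.2|) / (1 - γ₁)
        + |γ₁ - γ₂| * (⨆ p : S × A, |Q₂ p.1 p.2|) / (1 - γ₁) :=
      add_le_add (add_le_add h13 h34) h42
    _ ≤ Δr / (1 - γ₁) + γ₁ * Nr * ΔP / (1 - γ₁) ^ 2
        + |γ₁ - γ₂| * Nr / ((1 - γ₁) * (1 - γ₂)) :=
      add_le_add (add_le_add le_rfl e2) e3
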